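/- Suppose each f_k is μ-strongly convex (μ ≥ 0) with L-Lipschitz gradient, g is ν-strongly convex (ν ≥ 0), and the update satisfies -Σ_k ρ_k^{(t)}(∇f_k(Θ^{(t)}) + η^{(t)}) = ℓ(Θ^{(t+1)} - Θ^{(t)}) for some η^{(t)} ∈ ∂g(Θ^{(t+1)}) and ρ^{(t)} in the simplex. Then for all Θ in the feasible convex set and ℓ > L: Σ_k ρ_k^{(t)}(F_k(Θ^{(t+1)}) - F_k(Θ)) ≤ (ℓ/2)(‖Θ^{(t)} - Θ‖_F² - ‖Θ^{(t+1)} - Θ‖_F²) - (ν/2)‖Θ^{(t+1)} - Θ‖_F² - (μ/2)‖Θ^{(t)} - Θ‖_F². -/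

import Mathlib

open Matrix
open scoped NNReal

attribute [local instance] Matrix.frobeniusNormedAddCommGroup Matrix.frobeniusNormedSpace

section Aux

open Filter Set

/-- Limit lemma: if `a ≤ b + c * t` for all `t ∈ (0,1)` then `a ≤ b`. -/
lemma le_of_forall_Ioo_aux (a b c : ℝ) (h : ∀ t ∈ Set.Ioo (0:ℝ) 1, a ≤ b + c * t) : a ≤ b := by
  have h1 : Tendsto (fun t : ℝ => b + c * t) (nhdsWithin 0 (Set.Ioi 0)) (nhds b) := by
    have h2 : Tendsto (fun t : ℝ => b + c * t) (nhds 0) (nhds (b + c * 0)) :=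
      (continuous_const.add (continuous_const.mul continuous_id')).tendsto 0
    simpa using h2.mono_left nhdsWithin_le_nhds
  refine ge_of_tendsto h1 ?_
  filter_upwards [Ioo_mem_nhdsGT_of_mem (by norm_num : (0:ℝ) ∈ Set.Ico (0:ℝ) 1)] with t ht
  exact h t ht

/-- Descent lemma. -/
lemma descent_lemma_aux {E : Type*} [NormedAddCommGroup E] [NormedSpace ℝ E]
    (f : E → ℝ) (hf : Differentiable ℝ f) (L : ℝ≥0)
    (hlip : LipschitzWith L (fderiv ℝ f)) (x y : E) :
    f y ≤ f x + fderiv ℝ f x (y - x) + (L:ℝ) / 2 * ‖y - x‖ ^ 2 := by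
  set d := y - x with hd
  have hline : ∀ t : ℝ, HasDerivAt (fun s : ℝ => f (x + s • d)) (fderiv ℝ f (x + t • d) d) t := by
    intro t
    have h1 : HasDerivAt (fun s : ℝ => x + s • d) d t := by
      simpa using ((hasDerivAt_id t).smul_const d).const_add x
    exact (hf (x + t • d)).hasFDerivAt.comp_hasDerivAt t h1
  have hcont : Continuous fun t : ℝ => fderiv ℝ f (x + t • d) d := by
    have h1 : Continuous fun t : ℝ => fderiv ℝ f (x + t • d) :=
      hlip.continuous.comp (by continuity)
    exact h1.clm_apply continuous_const
  have hint : ∫ t in (0:ℝ)..1, fderiv ℝ f (x + t • d) d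
      = f (x + (1:ℝ) • d) - f (x + (0:ℝ) • d) :=
    intervalIntegral.integral_eq_sub_of_hasDerivAt (fun t _ => hline t)
      (hcont.intervalIntegrable 0 1)
  have hbound : ∫ t in (0:ℝ)..1, fderiv ℝ f (x + t • d) d ≤
      ∫ t in (0:ℝ)..1, (fderiv ℝ f x d + (L:ℝ) * ‖d‖^2 * t) := by
    apply intervalIntegral.integral_mono_on (by norm_num)
      (hcont.intervalIntegrable 0 1)
      ((continuous_const.add (continuous_const.mul continuous_id')).intervalIntegrable 0 1)
    intro t ht
    have h2 := (fderiv ℝ f (x + t • d) - fderiv ℝ f x).le_opNorm d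
    have h3 : ‖fderiv ℝ f (x + t • d) - fderiv ℝ f x‖ ≤ (L:ℝ) * (t * ‖d‖) := by
      have := hlip.dist_le_mul (x + t • d) x
      rw [dist_eq_norm, dist_eq_norm] at this
      simpa [norm_smul, abs_of_nonneg ht.1] using this
    have h4 : fderiv ℝ f (x + t • d) d - fderiv ℝ f x d ≤ (L:ℝ) * (t * ‖d‖) * ‖d‖ := by
      have h5 : (fderiv ℝ f (x + t • d) - fderiv ℝ f x) d
          = fderiv ℝ f (x + t • d) d - fderiv ℝ f x d := rfl
      calc fderiv ℝ f (x + t • d) d - fderiv ℝ f x d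
          ≤ |(fderiv ℝ f (x + t • d) - fderiv ℝ f x) d| := by rw [h5]; exact le_abs_self _
        _ ≤ ‖fderiv ℝ f (x + t • d) - fderiv ℝ f x‖ * ‖d‖ := h2
        _ ≤ (L:ℝ) * (t * ‖d‖) * ‖d‖ := by
            apply mul_le_mul_of_nonneg_right h3 (norm_nonneg d)
    show fderiv ℝ f (x + t • d) d ≤ fderiv ℝ f x d + (L:ℝ) * ‖d‖^2 * t
    nlinarith [norm_nonneg d, sq_nonneg ‖d‖]
  have hrhs : ∫ t in (0:ℝ)..1, (fderiv ℝ f x d + (L:ℝ) * ‖d‖^2 * t)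
      = fderiv ℝ f x d + (L:ℝ)/2 * ‖d‖^2 := by
    rw [intervalIntegral.integral_add (f := fun _ => fderiv ℝ f x d) (g := fun t => (L:ℝ) * ‖d‖^2 * t) (intervalIntegrable_const)
      ((continuous_const.mul continuous_id').intervalIntegrable 0 1),
      intervalIntegral.integral_const, intervalIntegral.integral_const_mul, integral_id]
    norm_num
    ring
  have hxy : x + (1:ℝ) • d = y := by rw [hd]; simp
  have hx0 : x + (0:ℝ) • d = x := by simp
  rw [hxy, hx0] at hint
  linarith [hint ▸ hbound.trans_eq hrhs]

/-- Gradient inequality for strongly convex differentiable functions. -/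
lemma strong_grad_aux {E : Type*} [NormedAddCommGroup E] [NormedSpace ℝ E]
    (f : E → ℝ) (s : Set E) (μ : ℝ) (hconv : StrongConvexOn s μ f)
    (x y : E) (hx : x ∈ s) (hy : y ∈ s) (hfd : DifferentiableAt ℝ f x) :
    f x + fderiv ℝ f x (y - x) + μ / 2 * ‖y - x‖ ^ 2 ≤ f y := by
  set D := fderiv ℝ f x (y - x) with hD
  have hder : HasDerivAt (fun t : ℝ => f (x + t • (y - x))) D 0 := by
    have h1 : HasDerivAt (fun t : ℝ => x + t • (y - x)) (y - x) 0 := by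
      simpa using ((hasDerivAt_id (0:ℝ)).smul_const (y - x)).const_add x
    have hf0 : HasFDerivAt f (fderiv ℝ f x) (x + (0:ℝ) • (y - x)) := by
      simpa using hfd.hasFDerivAt
    exact hf0.comp_hasDerivAt 0 h1
  have hslope : Tendsto (fun t : ℝ => (f (x + t • (y - x)) - f x) / t)
      (nhdsWithin 0 (Set.Ioi 0)) (nhds D) := by
    have h2 := hasDerivAt_iff_tendsto_slope.mp hder
    have h3 : Tendsto (slope (fun t : ℝ => f (x + t • (y - x))) 0)
        (nhdsWithin 0 (Set.Ioi 0)) (nhds D) :=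
      h2.mono_left (nhdsWithin_mono 0 (fun t ht => ne_of_gt ht))
    refine h3.congr' ?_
    filter_upwards [self_mem_nhdsWithin] with t ht
    simp [slope_def_field]
  have hrhs : Tendsto (fun t : ℝ => f y - f x - μ / 2 * (1 - t) * ‖x - y‖ ^ 2)
      (nhdsWithin 0 (Set.Ioi 0)) (nhds (f y - f x - μ / 2 * ‖x - y‖ ^ 2)) := by
    have h4 : Tendsto (fun t : ℝ => f y - f x - μ / 2 * (1 - t) * ‖x - y‖ ^ 2)
        (nhds 0) (nhds (f y - f x - μ / 2 * (1 - 0) * ‖x - y‖ ^ 2)) := by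
      apply Continuous.tendsto
      continuity
    simpa using h4.mono_left nhdsWithin_le_nhds
  have hle : D ≤ f y - f x - μ / 2 * ‖x - y‖ ^ 2 := by
    refine le_of_tendsto_of_tendsto hslope hrhs ?_
    filter_upwards [Ioo_mem_nhdsGT_of_mem (by norm_num : (0:ℝ) ∈ Set.Ico (0:ℝ) 1)] with t ht
    have hcomb : (1 - t) • x + t • y = x + t • (y - x) := by module
    have h5 := hconv.2 hx hy (show (0:ℝ) ≤ 1 - t by linarith [ht.2]) ht.1.le
      (show (1-t)+t = 1 by ring)
    rw [hcomb] at h5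
    have h6 : f (x + t • (y - x)) - f x ≤ t * (f y - f x - μ / 2 * (1 - t) * ‖x - y‖ ^ 2) := by
      simp only [smul_eq_mul] at h5
      nlinarith [h5]
    rw [div_le_iff₀ ht.1]
    nlinarith [h6]
  have hnorm : ‖x - y‖ = ‖y - x‖ := norm_sub_rev x y
  rw [hnorm] at hle
  linarith

lemma trace_form_aux {P : ℕ} (A B : Matrix (Fin P) (Fin P) ℝ) :
    (Aᵀ * B).trace = ∑ i, ∑ j, A i j * B i j := by
  rw [Matrix.trace]
  simp only [Matrix.diag, Matrix.mul_apply, Matrix.transpose_apply]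
  exact Finset.sum_comm

lemma norm_sq_aux {P : ℕ} (A : Matrix (Fin P) (Fin P) ℝ) :
    ‖A‖ ^ 2 = ∑ i, ∑ j, (A i j) ^ 2 := by
  have hS : (0:ℝ) ≤ ∑ i, ∑ j, ‖A i j‖ ^ (2:ℝ) := by positivity
  rw [Matrix.frobenius_norm_def, ← Real.rpow_natCast _ 2, ← Real.rpow_mul hS]
  norm_num

lemma key_identity_aux {P : ℕ} (X Y Z : Matrix (Fin P) (Fin P) ℝ) :
    ‖X - Z‖ ^ 2 - ‖Y - Z‖ ^ 2 = ‖Y - X‖ ^ 2 - 2 * ((Y - X)ᵀ * (Y - Z)).trace := by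
  rw [norm_sq_aux, norm_sq_aux, norm_sq_aux, trace_form_aux]
  rw [Finset.mul_sum, ← Finset.sum_sub_distrib, ← Finset.sum_sub_distrib]
  apply Finset.sum_congr rfl; intro i _
  rw [Finset.mul_sum, ← Finset.sum_sub_distrib, ← Finset.sum_sub_distrib]
  apply Finset.sum_congr rfl; intro j _
  simp only [Matrix.sub_apply]
  ring

end Aux

theorem per_iteration_inequality
    (P M : ℕ)
    (f : Fin M → Matrix (Fin P) (Fin P) ℝ → ℝ) (g : Matrix (Fin P) (Fin P) ℝ → ℝ)
    (Mset : Set (Matrix (Fin P) (Fin P) ℝ))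
    (μ ν : ℝ) (hμ : 0 ≤ μ) (hν : 0 ≤ ν)
    (hf : ∀ k, Differentiable ℝ (f k))
    (hfconv : ∀ k, StrongConvexOn Mset μ (f k))
    (L : ℝ≥0) (hlip : ∀ k, LipschitzWith L (@fderiv ℝ _ _ _ _ (PseudoMetricSpace.toUniformSpace.toTopologicalSpace) _ _ _ _ (f k)))
    (hgconv : StrongConvexOn Mset ν g)
    (ρ : Fin M → ℝ) (hρ : ∀ k, 0 ≤ ρ k) (hρsum : ∑ k, ρ k = 1)
    (ℓ : ℝ) (hℓ : (L : ℝ) < ℓ)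
    (Θt Θt1 η : Matrix (Fin P) (Fin P) ℝ) (hΘt : Θt ∈ Mset) (hΘt1 : Θt1 ∈ Mset)
    (Gf : Fin M → Matrix (Fin P) (Fin P) ℝ)
    (hGf : ∀ k, ∀ H : Matrix (Fin P) (Fin P) ℝ,
      fderiv ℝ (f k) Θt H = ((Gf k)ᵀ * H).trace)
    (hη : ∀ Φ ∈ Mset, g Θt1 + (ηᵀ * (Φ - Θt1)).trace ≤ g Φ)
    (hupdate : -(∑ k, ρ k • (Gf k + η)) = ℓ • (Θt1 - Θt)) :
    ∀ Θ ∈ Mset,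
      ∑ k, ρ k * ((f k Θt1 + g Θt1) - (f k Θ + g Θ)) ≤
        ℓ/2 * (‖Θt - Θ‖^2 - ‖Θt1 - Θ‖^2)
          - ν/2 * ‖Θt1 - Θ‖^2 - μ/2 * ‖Θt - Θ‖^2 := by
  intro Θ hΘ
  set d : Matrix (Fin P) (Fin P) ℝ := Θt1 - Θt with hdd
  -- Descent step
  have hA : ∀ k, f k Θt1 ≤ f k Θt + ((Gf k)ᵀ * d).trace + ℓ/2 * ‖d‖^2 := by
    intro k
    have h := descent_lemma_aux (f k) (hf k) L (hlip k) Θt Θt1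
    erw [hGf k] at h
    have h2 : (L:ℝ)/2 * ‖Θt1 - Θt‖^2 ≤ ℓ/2 * ‖Θt1 - Θt‖^2 := by
      apply mul_le_mul_of_nonneg_right _ (sq_nonneg _)
      linarith
    rw [hdd]
    linarith
  -- Strong convexity step for f k
  have hB : ∀ k, f k Θt + ((Gf k)ᵀ * (Θ - Θt)).trace + μ/2 * ‖Θt - Θ‖^2 ≤ f k Θ := by
    intro k
    have h := strong_grad_aux (f k) Mset μ (hfconv k) Θt Θ hΘt hΘ ((hf k) Θt)
    erw [hGf k, norm_sub_rev] at h
    exact h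
  -- Strengthened subgradient inequality for g
  have hC : (ηᵀ * (Θ - Θt1)).trace + ν/2 * ‖Θt1 - Θ‖^2 ≤ g Θ - g Θt1 := by
    apply le_of_forall_Ioo_aux _ _ (ν/2 * ‖Θt1 - Θ‖^2)
    intro t ht
    have hmem : (1 - t) • Θt1 + t • Θ ∈ Mset :=
      hgconv.1 hΘt1 hΘ (by linarith [ht.2]) ht.1.le (by ring)
    have h1 := hη _ hmem
    have h2 := hgconv.2 hΘt1 hΘ (show (0:ℝ) ≤ 1 - t by linarith [ht.2]) ht.1.le
      (show (1-t)+t = 1 by ring)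
    have hpt : (1 - t) • Θt1 + t • Θ - Θt1 = t • (Θ - Θt1) := by module
    rw [hpt] at h1
    have htr : (ηᵀ * (t • (Θ - Θt1))).trace = t * (ηᵀ * (Θ - Θt1)).trace := by
      rw [Matrix.mul_smul, Matrix.trace_smul, smul_eq_mul]
    rw [htr] at h1
    simp only [smul_eq_mul] at h2
    have key : t * ((ηᵀ * (Θ - Θt1)).trace + ν/2 * ‖Θt1 - Θ‖^2)
        ≤ t * ((g Θ - g Θt1) + ν/2 * ‖Θt1 - Θ‖^2 * t) := by
      nlinarith [h1, h2]
    exact (mul_le_mul_iff_right₀ ht.1).mp key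
  -- per-k bound
  have hk : ∀ k, (f k Θt1 + g Θt1) - (f k Θ + g Θ) ≤
      ((Gf k + η)ᵀ * (Θt1 - Θ)).trace
        + (ℓ/2 * ‖d‖^2 - μ/2 * ‖Θt - Θ‖^2 - ν/2 * ‖Θt1 - Θ‖^2) := by
    intro k
    have htr1 : ((Gf k + η)ᵀ * (Θt1 - Θ)).trace
        = ((Gf k)ᵀ * d).trace - ((Gf k)ᵀ * (Θ - Θt)).trace - (ηᵀ * (Θ - Θt1)).trace := by
      rw [trace_form_aux, trace_form_aux, trace_form_aux, trace_form_aux]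
      rw [← Finset.sum_sub_distrib, ← Finset.sum_sub_distrib]
      apply Finset.sum_congr rfl; intro i _
      rw [← Finset.sum_sub_distrib, ← Finset.sum_sub_distrib]
      apply Finset.sum_congr rfl; intro j _
      simp only [Matrix.add_apply, Matrix.sub_apply, hdd]
      ring
    have := hA k
    have := hB k
    linarith [hA k, hB k, hC, htr1.ge, htr1.le]
  -- sum up
  have hsum : ∑ k, ρ k * ((f k Θt1 + g Θt1) - (f k Θ + g Θ))
      ≤ ∑ k, ρ k * (((Gf k + η)ᵀ * (Θt1 - Θ)).trace
        + (ℓ/2 * ‖d‖^2 - μ/2 * ‖Θt - Θ‖^2 - ν/2 * ‖Θt1 - Θ‖^2)) := by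
    apply Finset.sum_le_sum
    intro k _
    exact mul_le_mul_of_nonneg_left (hk k) (hρ k)
  -- rewrite the sum
  set C : ℝ := ℓ/2 * ‖d‖^2 - μ/2 * ‖Θt - Θ‖^2 - ν/2 * ‖Θt1 - Θ‖^2 with hCdef
  have hsplit : ∑ k, ρ k * (((Gf k + η)ᵀ * (Θt1 - Θ)).trace + C)
      = (∑ k, ρ k * ((Gf k + η)ᵀ * (Θt1 - Θ)).trace) + C := by
    simp_rw [mul_add]
    rw [Finset.sum_add_distrib, ← Finset.sum_mul, hρsum, one_mul]
  have hS : ∑ k, ρ k * ((Gf k + η)ᵀ * (Θt1 - Θ)).trace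
      = ((∑ k, ρ k • (Gf k + η))ᵀ * (Θt1 - Θ)).trace := by
    rw [trace_form_aux]
    simp_rw [trace_form_aux, Finset.mul_sum, Matrix.sum_apply, Matrix.smul_apply,
      smul_eq_mul, Finset.sum_mul]
    rw [Finset.sum_comm]
    apply Finset.sum_congr rfl; intro i _
    rw [Finset.sum_comm]
    apply Finset.sum_congr rfl; intro j _
    apply Finset.sum_congr rfl; intro k _
    ring
  have hupd2 : (∑ k, ρ k • (Gf k + η)) = -(ℓ • d) := by
    rw [← hupdate, neg_neg]
  have hS2 : ((∑ k, ρ k • (Gf k + η))ᵀ * (Θt1 - Θ)).trace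
      = -(ℓ * (dᵀ * (Θt1 - Θ)).trace) := by
    rw [hupd2]
    rw [Matrix.transpose_neg, Matrix.transpose_smul, Matrix.neg_mul, Matrix.smul_mul,
      Matrix.trace_neg, Matrix.trace_smul, smul_eq_mul]
  have hid := key_identity_aux Θt Θt1 Θ
  rw [← hdd] at hid
  calc ∑ k, ρ k * ((f k Θt1 + g Θt1) - (f k Θ + g Θ))
      ≤ (∑ k, ρ k * ((Gf k + η)ᵀ * (Θt1 - Θ)).trace) + C := by
        rw [← hsplit]; exact hsum
    _ = -(ℓ * (dᵀ * (Θt1 - Θ)).trace) + C := by rw [hS, hS2]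
    _ ≤ ℓ/2 * (‖Θt - Θ‖^2 - ‖Θt1 - Θ‖^2) - ν/2 * ‖Θt1 - Θ‖^2 - μ/2 * ‖Θt - Θ‖^2 := by
        have hlin : ℓ/2 * (‖Θt - Θ‖^2 - ‖Θt1 - Θ‖^2)
            = ℓ/2 * ‖d‖^2 - ℓ * (dᵀ * (Θt1 - Θ)).trace := by rw [hid]; ring
        rw [hCdef]
        linarith
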